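/- Let k be a field and R = RCFM(k). For the shift matrix A (a_{i+1,i}=1, else 0), the set (I − A)·R equals the set of matrices R' ∈ R such that for every column j, the sum over all i of r'_{ij} equals 0. -/

import Mathlib

/-- A matrix is row-column finite if every row and every column has finitely many
nonzero entries. -/
def RCF {k : Type*} [Field k] (M : ℕ → ℕ → k) : Prop :=
  (∀ i, {j | M i j ≠ 0}.Finite) ∧ (∀ j, {i | M i j ≠ 0}.Finite)

/-- The shift matrix `A` over `k`: `a_{i+1,i} = 1` and all other entries `0`. -/
def shiftA (k : Type*) [Field k] : ℕ → ℕ → k := fun i j => if i = j + 1 then 1 else 0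

/-- The identity `ℕ×ℕ` matrix over `k`. -/
def idMat (k : Type*) [Field k] : ℕ → ℕ → k := fun i j => if i = j then 1 else 0

/-- Product of `ℕ×ℕ` matrices, defined entrywise by the (finite) sums. -/
noncomputable def matMul {k : Type*} [Field k] (M N : ℕ → ℕ → k) : ℕ → ℕ → k :=
  fun i j => ∑ᶠ l, M i l * N l j

lemma mulEntry {k : Type*} [Field k] (X : ℕ → ℕ → k) (i j : ℕ) :
    matMul (idMat k - shiftA k) X i j = X i j - (if i = 0 then 0 else X (i-1) j) := by
  unfold matMul idMat shiftA
  cases i with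
  | zero =>
    rw [finsum_eq_single _ 0 ?_]
    · simp
    · intro l hl
      simp [Pi.sub_apply, Ne.symm hl]
  | succ n =>
    rw [finsum_eq_finset_sum_of_support_subset _ (s := ({n, n+1} : Finset ℕ)) ?_]
    · rw [Finset.sum_pair (by omega)]
      have h1 : ¬ (n + 1 = n) := by omega
      simp [Pi.sub_apply, h1]
      ring
    · intro l hl
      simp only [Function.mem_support, Pi.sub_apply] at hl
      by_contra hc
      simp only [Finset.coe_insert, Finset.coe_singleton, Set.mem_insert_iff,
        Set.mem_singleton_iff] at hc
      push_neg at hc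
      have h1 : ¬ (n + 1 = l) := by omega
      have h2 : ¬ (n + 1 = l + 1) := by omega
      simp [h1, h2] at hl
      exact hc.1 hl.1.symm

lemma telescope {k : Type*} [Field k] (f : ℕ → k) (m : ℕ) :
    ∑ i ∈ Finset.range (m+1), (f i - if i = 0 then 0 else f (i-1)) = f m := by
  induction m with
  | zero => simp
  | succ n ih => rw [Finset.sum_range_succ, ih]; simp

/-- `(I−A)·RCFM(k)` consists exactly of the row-column-finite matrices all of whose
column sums vanish. -/
theorem sub_shiftA_mul_RCFM (k : Type*) [Field k] :
    {P : ℕ → ℕ → k | ∃ X, RCF X ∧ P = matMul (idMat k - shiftA k) X} =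
      {P : ℕ → ℕ → k | RCF P ∧ ∀ j, (∑ᶠ i, P i j) = 0} := by
  ext P
  simp only [Set.mem_setOf_eq]
  constructor
  · rintro ⟨X, hX, rfl⟩
    have hE : ∀ i j, matMul (idMat k - shiftA k) X i j
        = X i j - (if i = 0 then 0 else X (i-1) j) := mulEntry X
    constructor
    · constructor
      · intro i
        apply Set.Finite.subset ((hX.1 i).union (hX.1 (i-1)))
        intro j hj
        simp only [Set.mem_setOf_eq, hE] at hj
        by_contra hc
        simp only [Set.mem_union, Set.mem_setOf_eq] at hc
        push_neg at hc
        simp [hc.1, hc.2] at hj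
      · intro j
        apply Set.Finite.subset ((hX.2 j).union ((hX.2 j).image (· + 1)))
        intro i hi
        simp only [Set.mem_setOf_eq, hE] at hi
        by_contra hc
        simp only [Set.mem_union, Set.mem_setOf_eq, Set.mem_image] at hc
        push_neg at hc
        have h1 : X i j = 0 := hc.1
        rcases Nat.eq_zero_or_pos i with h0 | h0
        · subst h0; simp [h1] at hi
        · have h2 : X (i-1) j = 0 := by
            by_contra h
            exact hc.2 (i-1) h (by omega)
          simp [Nat.pos_iff_ne_zero.mp h0, h1, h2] at hi
    · intro j
      obtain ⟨N, hN⟩ := (hX.2 j).bddAbove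
      have hz : ∀ i, N < i → X i j = 0 := by
        intro i hi
        by_contra h
        exact absurd (hN h) (by omega)
      rw [finsum_eq_finset_sum_of_support_subset _ (s := Finset.range (N+2)) ?_]
      · have := telescope (fun i => X i j) (N+1)
        simp only [hE]
        rw [this]
        exact hz (N+1) (by omega)
      · intro i hi
        simp only [Function.mem_support, hE] at hi
        by_contra hc
        simp only [Finset.coe_range, Set.mem_Iio] at hc
        push_neg at hc
        have h1 : X i j = 0 := hz i (by omega)
        have h2 : X (i-1) j = 0 := hz (i-1) (by omega)
        simp [h1, h2, show ¬ i = 0 by omega] at hi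
  · rintro ⟨hP, hsum⟩
    set X : ℕ → ℕ → k := fun i j => ∑ l ∈ Finset.range (i+1), P l j with hXdef
    have hcol : ∀ j, ∃ N, ∀ i, N ≤ i → X i j = 0 := by
      intro j
      obtain ⟨N, hN⟩ := (hP.2 j).bddAbove
      refine ⟨N+1, fun i hi => ?_⟩
      have : Function.support (fun l => P l j) ⊆ (Finset.range (i+1) : Finset ℕ) := by
        intro l hl
        simp only [Function.mem_support] at hl
        have := hN hl
        simp only [Finset.coe_range, Set.mem_Iio]
        omega
      have := finsum_eq_finset_sum_of_support_subset (fun l => P l j) this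
      simp only [hXdef]
      rw [← this, hsum j]
    refine ⟨X, ⟨?_, ?_⟩, ?_⟩
    · intro i
      apply Set.Finite.subset (Set.Finite.biUnion (Set.finite_Iio (i+1))
        (fun l _ => hP.1 l))
      intro j hj
      simp only [Set.mem_setOf_eq, hXdef] at hj
      simp only [Set.mem_iUnion, Set.mem_setOf_eq, Set.mem_Iio]
      by_contra hc
      push_neg at hc
      exact hj (Finset.sum_eq_zero fun l hl => hc l (Finset.mem_range.mp hl))
    · intro j
      obtain ⟨N, hN⟩ := hcol j
      apply Set.Finite.subset (Set.finite_Iio N)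
      intro i hi
      simp only [Set.mem_setOf_eq] at hi
      simp only [Set.mem_Iio]
      by_contra hc
      exact hi (hN i (by omega))
    · funext i j
      rw [mulEntry]
      simp only [hXdef]
      cases i with
      | zero => simp
      | succ n =>
        simp only [Nat.succ_ne_zero, if_neg, Nat.add_sub_cancel]
        rw [Finset.sum_range_succ]
        ring_nf
        simp
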